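/- Let G ∈ 𝒢_{m1,m2} with m1 ≤ M_2/M and m2 ≤ M_2²/M². Let f_ℓ(G) denote the number of ordered 5-tuples (v1,v2,v3,v4,v5) of distinct vertices of G such that there is a loop at v2, v1v4 and v3v5 are simple edges, and v1v2, v2v3 and v4v5 are non-edges (the number of ℓ-switchings applicable to G). Then m1·M²·(1 − (11Δ² − 4Δ + 4)/M) ≤ f_ℓ(G) ≤ m1·M². -/

import Mathlib

open Finset

lemma aux_inj5 {α : Type*} [DecidableEq α] {a b c d e : α}
    (h1 : a ≠ b) (h2 : a ≠ c) (h3 : a ≠ d) (h4 : a ≠ e) (h5 : b ≠ c)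
    (h6 : b ≠ d) (h7 : b ≠ e) (h8 : c ≠ d) (h9 : c ≠ e) (h10 : d ≠ e) :
    Function.Injective ![a, b, c, d, e] := by
  intro i j hij
  fin_cases i <;> fin_cases j <;> simp_all

lemma aux_or_card {α : Type*} [DecidableEq α] (s : Finset α) (p q : α → Prop)
    [DecidablePred p] [DecidablePred q] :
    (s.filter (fun x => p x ∨ q x)).card ≤ (s.filter p).card + (s.filter q).card := by
  rw [filter_or]; exact card_union_le _ _

lemma aux_prodA {β γ : Type*} (B : Finset β) (C : Finset γ)
    (p : β × γ → Prop) [DecidablePred p] (K : ℕ)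
    (h : ∀ b ∈ B, (C.filter (fun c => p (b, c))).card ≤ K) :
    ((B ×ˢ C).filter p).card ≤ B.card * K := by
  have : ((B ×ˢ C).filter p).card = ∑ b ∈ B, (C.filter (fun c => p (b, c))).card := by
    rw [Finset.card_filter, Finset.sum_product]
    exact Finset.sum_congr rfl fun b _ => (Finset.card_filter _ _).symm
  rw [this]
  calc ∑ b ∈ B, (C.filter (fun c => p (b, c))).card ≤ ∑ b ∈ B, K :=
        Finset.sum_le_sum h
    _ = B.card * K := by rw [Finset.sum_const, smul_eq_mul]

lemma aux_prodB {β γ : Type*} (B : Finset β) (C : Finset γ)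
    (p : β × γ → Prop) [DecidablePred p] (K : ℕ)
    (h : ∀ c ∈ C, (B.filter (fun b => p (b, c))).card ≤ K) :
    ((B ×ˢ C).filter p).card ≤ K * C.card := by
  have : ((B ×ˢ C).filter p).card = ∑ c ∈ C, (B.filter (fun b => p (b, c))).card := by
    rw [Finset.card_filter, Finset.sum_product_right]
    exact Finset.sum_congr rfl fun c _ => (Finset.card_filter _ _).symm
  rw [this]
  calc ∑ c ∈ C, (B.filter (fun b => p (b, c))).card ≤ ∑ c ∈ C, K :=
        Finset.sum_le_sum h
    _ = K * C.card := by rw [Finset.sum_const, smul_eq_mul, mul_comm]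

set_option maxHeartbeats 1000000 in
/-- **Bounds on the number `f_ℓ(G)` of ℓ-switchings applicable to `G`.**
`G ∈ 𝒢_{m1,m2}` with `m1 ≤ M₂/M` and `m2 ≤ M₂²/M²`.  `f_ℓ(G)` is the number
of ordered 5-tuples `(v1,…,v5)` of distinct vertices with a loop at `v2`,
`v1v4` and `v3v5` simple edges, and `v1v2`, `v2v3`, `v4v5` non-edges.  Then
`m1·M²·(1 − (11Δ² − 4Δ + 4)/M) ≤ f_ℓ(G) ≤ m1·M²`. -/
theorem fl_bounds (n : ℕ) (d : Fin n → ℕ) (mG : Fin n → Fin n → ℕ)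
    (M M2 Δ m1 m2 : ℕ)
    (hM : M = ∑ i, d i)
    (hM2 : M2 = ∑ i, d i * (d i - 1))
    (hΔ : Δ = Finset.univ.sup d)
    (hsymm : ∀ u v, mG u v = mG v u)
    (hdeg : ∀ v, (∑ u ∈ Finset.univ.filter (fun u => u ≠ v), mG v u)
        + 2 * mG v v = d v)
    (hloop : ∀ v, mG v v ≤ 1)
    (hmul : ∀ u v, u ≠ v → mG u v ≤ 2)
    (hm1 : m1 = ∑ v, mG v v)
    (hm2 : 2 * m2 = Set.ncard {q : Fin n × Fin n | q.1 ≠ q.2 ∧ mG q.1 q.2 = 2})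
    (hm1le : (m1 : ℝ) ≤ (M2 : ℝ) / M)
    (hm2le : (m2 : ℝ) ≤ (M2 : ℝ) ^ 2 / (M : ℝ) ^ 2)
    (fl : ℕ)
    (hfl : fl = Set.ncard {t : Fin 5 → Fin n | Function.Injective t ∧
      1 ≤ mG (t 1) (t 1) ∧
      mG (t 0) (t 3) = 1 ∧ mG (t 2) (t 4) = 1 ∧
      mG (t 0) (t 1) = 0 ∧ mG (t 1) (t 2) = 0 ∧ mG (t 3) (t 4) = 0}) :
    (m1 : ℝ) * M ^ 2 * (1 - (11 * Δ ^ 2 - 4 * Δ + 4) / M) ≤ (fl : ℝ)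
      ∧ fl ≤ m1 * M ^ 2 := by
  classical
  -- Finset versions of the sets
  obtain ⟨L, hL⟩ : ∃ L : Finset (Fin n), L = univ.filter (fun v => 1 ≤ mG v v) := ⟨_, rfl⟩
  obtain ⟨S, hS⟩ : ∃ S : Finset (Fin n × Fin n),
      S = univ.filter (fun q => q.1 ≠ q.2 ∧ mG q.1 q.2 = 1) := ⟨_, rfl⟩
  obtain ⟨T, hT⟩ : ∃ T : Finset (Fin 5 → Fin n),
      T = univ.filter (fun t => Function.Injective t ∧
      1 ≤ mG (t 1) (t 1) ∧
      mG (t 0) (t 3) = 1 ∧ mG (t 2) (t 4) = 1 ∧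
      mG (t 0) (t 1) = 0 ∧ mG (t 1) (t 2) = 0 ∧ mG (t 3) (t 4) = 0) := ⟨_, rfl⟩
  have hflT : fl = T.card := by
    rw [hfl, show {t : Fin 5 → Fin n | Function.Injective t ∧
      1 ≤ mG (t 1) (t 1) ∧
      mG (t 0) (t 3) = 1 ∧ mG (t 2) (t 4) = 1 ∧
      mG (t 0) (t 1) = 0 ∧ mG (t 1) (t 2) = 0 ∧ mG (t 3) (t 4) = 0} = ↑T by
        ext t; simp [hT], Set.ncard_coe_finset]
  obtain ⟨D, hD⟩ : ∃ D : Finset (Fin n × Fin n),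
      D = univ.filter (fun q => q.1 ≠ q.2 ∧ mG q.1 q.2 = 2) := ⟨_, rfl⟩
  have hm2D : 2 * m2 = D.card := by
    rw [hm2, show {q : Fin n × Fin n | q.1 ≠ q.2 ∧ mG q.1 q.2 = 2} = ↑D by
      ext q; simp [hD], Set.ncard_coe_finset]
  clear hfl hm2
  have hm1L : m1 = L.card := by
    rw [hm1, hL, Finset.card_filter]
    refine Finset.sum_congr rfl fun v _ => ?_
    have := hloop v; split <;> omega
  -- degenerate case
  rcases Nat.eq_zero_or_pos m1 with h0 | hm1pos
  · have hdiag : ∀ v, mG v v = 0 := by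
      intro v
      have := (Finset.sum_eq_zero_iff.mp (h0 ▸ hm1).symm) v (mem_univ v)
      exact this
    have : T = ∅ := by
      rw [hT, Finset.filter_eq_empty_iff]
      intro t _ h
      have := h.2.1
      rw [hdiag] at this; omega
    have hfl0 : fl = 0 := by rw [hflT, this, Finset.card_empty]
    subst h0
    constructor
    · simp [hfl0]
    · simp [hfl0]
  -- main case: m1 ≥ 1
  have hdΔ : ∀ w, d w ≤ Δ := fun w => hΔ ▸ Finset.le_sup (mem_univ w)
  have hdeg' : ∀ v, (∑ u ∈ univ.erase v, mG v u) + 2 * mG v v = d v := by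
    intro v
    rw [← hdeg v]
    congr 1
    rw [Finset.filter_ne']
  have hSfst : ∀ w, (S.filter (fun e => e.1 = w)).card ≤ d w := by
    intro w
    have himg : S.filter (fun e => e.1 = w)
        = ((univ.erase w).filter (fun u => mG w u = 1)).image (fun u => (w, u)) := by
      ext ⟨a, b⟩
      simp only [hS, mem_filter, mem_univ, true_and, Finset.mem_image, mem_erase,
        Finset.filter_filter]
      constructor
      · rintro ⟨⟨hne, h1⟩, rfl⟩
        exact ⟨b, ⟨⟨Ne.symm hne, trivial⟩, h1⟩, rfl⟩
      · rintro ⟨u, ⟨⟨hu, -⟩, h1⟩, heq⟩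
        obtain ⟨rfl, rfl⟩ := Prod.mk.injEq .. ▸ heq
        exact ⟨⟨Ne.symm hu, h1⟩, rfl⟩
    rw [himg, Finset.card_image_of_injective _ (fun u v h => (Prod.ext_iff.mp h).2)]
    have h2 : ((univ.erase w).filter (fun u => mG w u = 1)).card
        ≤ ∑ u ∈ univ.erase w, mG w u := by
      rw [Finset.card_filter]
      exact Finset.sum_le_sum fun u _ => by split <;> omega
    have := hdeg' w
    omega
  have hSsnd : ∀ w, (S.filter (fun e => e.2 = w)).card ≤ d w := by
    intro w
    have himg : S.filter (fun e => e.2 = w)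
        = ((univ.erase w).filter (fun u => mG w u = 1)).image (fun u => (u, w)) := by
      ext ⟨a, b⟩
      simp only [hS, mem_filter, mem_univ, true_and, Finset.mem_image, mem_erase,
        Finset.filter_filter]
      constructor
      · rintro ⟨⟨hne, h1⟩, rfl⟩
        exact ⟨a, ⟨⟨hne, trivial⟩, by rw [hsymm]; exact h1⟩, rfl⟩
      · rintro ⟨u, ⟨⟨hu, -⟩, h1⟩, heq⟩
        obtain ⟨rfl, rfl⟩ := Prod.mk.injEq .. ▸ heq
        exact ⟨⟨hu, by rw [hsymm] at h1; exact h1⟩, rfl⟩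
    rw [himg, Finset.card_image_of_injective _ (fun u v h => (Prod.ext_iff.mp h).1)]
    have h2 : ((univ.erase w).filter (fun u => mG w u = 1)).card
        ≤ ∑ u ∈ univ.erase w, mG w u := by
      rw [Finset.card_filter]
      exact Finset.sum_le_sum fun u _ => by split <;> omega
    have := hdeg' w
    omega
  have hNbr : ∀ w, (univ.filter (fun u => 1 ≤ mG u w)).card ≤ d w := by
    intro w
    rw [Finset.card_filter, ← Finset.add_sum_erase _ _ (mem_univ w)]
    have h1 : (if 1 ≤ mG w w then 1 else 0) ≤ 2 * mG w w := by split <;> omega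
    have h2 : ∑ u ∈ univ.erase w, (if 1 ≤ mG u w then 1 else 0)
        ≤ ∑ u ∈ univ.erase w, mG w u :=
      Finset.sum_le_sum fun u _ => by rw [hsymm w u]; split <;> omega
    have := hdeg' w
    omega
  have hNbr2 : ∀ w, (univ.filter (fun u => 1 ≤ mG w u)).card ≤ d w := by
    intro w
    have : univ.filter (fun u => 1 ≤ mG w u) = univ.filter (fun u => 1 ≤ mG u w) :=
      Finset.filter_congr fun u _ => by rw [hsymm w u]
    rw [this]; exact hNbr w
  have hfiber : ∀ (p : Fin n × Fin n → Prop) [DecidablePred p] (w : Fin n),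
      ((S.filter p).filter (fun e => e.1 = w)).card ≤ Δ := by
    intro p _ w
    calc ((S.filter p).filter (fun e => e.1 = w)).card
        ≤ (S.filter (fun e => e.1 = w)).card := by
          apply Finset.card_le_card
          intro e he
          simp only [mem_filter] at he ⊢
          exact ⟨he.1.1, he.2⟩
      _ ≤ Δ := (hSfst w).trans (hdΔ w)
  have hfiber2 : ∀ (p : Fin n × Fin n → Prop) [DecidablePred p] (w : Fin n),
      ((S.filter p).filter (fun e => e.2 = w)).card ≤ Δ := by
    intro p _ w
    calc ((S.filter p).filter (fun e => e.2 = w)).card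
        ≤ (S.filter (fun e => e.2 = w)).card := by
          apply Finset.card_le_card
          intro e he
          simp only [mem_filter] at he ⊢
          exact ⟨he.1.1, he.2⟩
      _ ≤ Δ := (hSsnd w).trans (hdΔ w)
  have bA : ∀ w, (S.filter (fun e => 1 ≤ mG e.1 w)).card ≤ Δ * Δ := by
    intro w
    rw [Finset.card_eq_sum_card_fiberwise
      (f := Prod.fst) (t := univ.filter (fun u => 1 ≤ mG u w))
      (fun e he => by simp only [mem_coe, mem_filter] at he ⊢; exact ⟨mem_univ _, he.2⟩)]
    calc ∑ b ∈ univ.filter (fun u => 1 ≤ mG u w),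
          ((S.filter (fun e => 1 ≤ mG e.1 w)).filter (fun e => e.1 = b)).card
        ≤ ∑ b ∈ univ.filter (fun u => 1 ≤ mG u w), Δ :=
          Finset.sum_le_sum fun b _ => hfiber _ b
      _ = (univ.filter (fun u => 1 ≤ mG u w)).card * Δ := by
          rw [Finset.sum_const, smul_eq_mul]
      _ ≤ Δ * Δ := Nat.mul_le_mul ((hNbr w).trans (hdΔ w)) le_rfl
  have bB : ∀ w, (S.filter (fun e => 1 ≤ mG w e.1)).card ≤ Δ * Δ := by
    intro w
    have : S.filter (fun e => 1 ≤ mG w e.1) = S.filter (fun e => 1 ≤ mG e.1 w) :=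
      Finset.filter_congr fun e _ => by rw [hsymm w e.1]
    rw [this]; exact bA w
  have bC : ∀ w, (S.filter (fun e => 1 ≤ mG w e.2)).card ≤ Δ * Δ := by
    intro w
    rw [Finset.card_eq_sum_card_fiberwise
      (f := Prod.snd) (t := univ.filter (fun u => 1 ≤ mG w u))
      (fun e he => by simp only [mem_coe, mem_filter] at he ⊢; exact ⟨mem_univ _, he.2⟩)]
    calc ∑ b ∈ univ.filter (fun u => 1 ≤ mG w u),
          ((S.filter (fun e => 1 ≤ mG w e.2)).filter (fun e => e.2 = b)).card
        ≤ ∑ b ∈ univ.filter (fun u => 1 ≤ mG w u), Δ :=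
          Finset.sum_le_sum fun b _ => hfiber2 _ b
      _ = (univ.filter (fun u => 1 ≤ mG w u)).card * Δ := by
          rw [Finset.sum_const, smul_eq_mul]
      _ ≤ Δ * Δ := Nat.mul_le_mul ((hNbr2 w).trans (hdΔ w)) le_rfl
  have hScard : S.card = ∑ v, ∑ u ∈ univ.erase v, (if mG v u = 1 then 1 else 0) := by
    rw [hS, Finset.card_filter, ← Finset.univ_product_univ, Finset.sum_product]
    refine Finset.sum_congr rfl fun v _ => ?_
    rw [← Finset.filter_ne, Finset.sum_filter]
    refine Finset.sum_congr rfl fun u _ => ?_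
    by_cases h1 : v ≠ u <;> by_cases h2 : mG v u = 1 <;> simp [h1, h2]
  have hDcard : D.card = ∑ v, ∑ u ∈ univ.erase v, (if mG v u = 2 then 1 else 0) := by
    rw [hD, Finset.card_filter, ← Finset.univ_product_univ, Finset.sum_product]
    refine Finset.sum_congr rfl fun v _ => ?_
    rw [← Finset.filter_ne, Finset.sum_filter]
    refine Finset.sum_congr rfl fun u _ => ?_
    by_cases h1 : v ≠ u <;> by_cases h2 : mG v u = 2 <;> simp [h1, h2]
  have hsum : S.card + 2 * D.card + 2 * m1 = M := by
    have key : ∑ v, ∑ u ∈ univ.erase v, mG v u = S.card + 2 * D.card := by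
      rw [hScard, hDcard, Finset.mul_sum, ← Finset.sum_add_distrib]
      refine Finset.sum_congr rfl fun v _ => ?_
      rw [Finset.mul_sum, ← Finset.sum_add_distrib]
      refine Finset.sum_congr rfl fun u hu => ?_
      have hne : v ≠ u := (Finset.mem_erase.mp hu).1.symm
      have := hmul v u hne
      split_ifs <;> omega
    have h1 : ∑ v, ((∑ u ∈ univ.erase v, mG v u) + 2 * mG v v) = M := by
      rw [hM]; exact Finset.sum_congr rfl fun v _ => hdeg' v
    rw [Finset.sum_add_distrib, ← Finset.mul_sum, ← hm1, key] at h1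
    omega
  have hFj : ∀ t : Fin 5 → Fin n, ![t 0, t 1, t 2, t 3, t 4] = t := by
    intro t; funext i; fin_cases i <;> rfl
  have hgood : ((L ×ˢ (S ×ˢ S)).filter
      (fun x => ![x.2.1.1, x.1, x.2.2.1, x.2.1.2, x.2.2.2] ∈ T)).card = T.card := by
    refine Finset.card_bij' (fun x _ => ![x.2.1.1, x.1, x.2.2.1, x.2.1.2, x.2.2.2])
      (fun t _ => (t 1, ((t 0, t 3), (t 2, t 4)))) ?_ ?_ ?_ ?_
    · intro x hx; exact (Finset.mem_filter.mp hx).2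
    · intro t ht
      have htT := ht
      rw [hT, Finset.mem_filter] at ht
      obtain ⟨-, hinj, hloopt, h03, h24, -, -, -⟩ := ht
      rw [Finset.mem_filter]
      constructor
      · rw [Finset.mem_product]
        refine ⟨?_, ?_⟩
        · rw [hL, Finset.mem_filter]; exact ⟨mem_univ _, hloopt⟩
        · rw [Finset.mem_product]
          constructor
          · rw [hS, Finset.mem_filter]
            exact ⟨mem_univ _, hinj.ne (by decide : (0 : Fin 5) ≠ 3), h03⟩
          · rw [hS, Finset.mem_filter]
            exact ⟨mem_univ _, hinj.ne (by decide : (2 : Fin 5) ≠ 4), h24⟩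
      · show ![t 0, t 1, t 2, t 3, t 4] ∈ T
        rw [hFj]; exact htT
    · intro x hx
      obtain ⟨v2, ⟨⟨v1, v4⟩, ⟨v3, v5⟩⟩⟩ := x
      rfl
    · intro t ht
      exact hFj t
  have hXcard : (L ×ˢ (S ×ˢ S)).card = L.card * (S.card * S.card) := by
    rw [Finset.card_product, Finset.card_product]
  have hpart : ((L ×ˢ (S ×ˢ S)).filter
        (fun x => ![x.2.1.1, x.1, x.2.2.1, x.2.1.2, x.2.2.2] ∈ T)).card
      + ((L ×ˢ (S ×ˢ S)).filter
        (fun x => ¬ (![x.2.1.1, x.1, x.2.2.1, x.2.1.2, x.2.2.2] ∈ T))).card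
      = L.card * (S.card * S.card) := by
    rw [Finset.card_filter_add_card_filter_not, hXcard]
  have hSM : S.card ≤ M := by omega
  have hupper : fl ≤ m1 * M ^ 2 := by
    rw [hflT, ← hgood, hm1L, pow_two]
    calc ((L ×ˢ (S ×ˢ S)).filter _).card
        ≤ L.card * (S.card * S.card) := by omega
      _ ≤ L.card * (M * M) :=
          Nat.mul_le_mul le_rfl (Nat.mul_le_mul hSM hSM)
  -- the bad set is contained in the union of 11 easy-to-bound sets
  have hbadsub : ((L ×ˢ (S ×ˢ S)).filter
        (fun x => ¬ (![x.2.1.1, x.1, x.2.2.1, x.2.1.2, x.2.2.2] ∈ T)))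
      ⊆ ((L ×ˢ (S ×ˢ S)).filter (fun x =>
        x.2.1.1 = x.1 ∨ x.2.1.2 = x.1 ∨ x.2.2.1 = x.1 ∨ x.2.2.2 = x.1
        ∨ x.2.2.1 = x.2.1.1 ∨ x.2.2.1 = x.2.1.2 ∨ x.2.2.2 = x.2.1.1
        ∨ x.2.2.2 = x.2.1.2
        ∨ 1 ≤ mG x.2.1.1 x.1 ∨ 1 ≤ mG x.1 x.2.2.1 ∨ 1 ≤ mG x.2.1.2 x.2.2.2)) := by
    intro x hx
    rw [Finset.mem_filter] at hx ⊢
    obtain ⟨hxX, hxT⟩ := hx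
    refine ⟨hxX, ?_⟩
    obtain ⟨v2, ⟨⟨v1, v4⟩, ⟨v3, v5⟩⟩⟩ := x
    rw [Finset.mem_product, Finset.mem_product] at hxX
    obtain ⟨hv2, he1, he2⟩ := hxX
    rw [hL, Finset.mem_filter] at hv2
    rw [hS, Finset.mem_filter] at he1 he2
    simp only at he1 he2 hv2
    by_contra hC
    push_neg at hC
    obtain ⟨c1, c2, c3, c4, c5, c6, c7, c8, c9, c10, c11⟩ := hC
    apply hxT
    rw [hT, Finset.mem_filter]
    refine ⟨mem_univ _, ?_, ?_, ?_, ?_, ?_, ?_, ?_⟩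
    · exact aux_inj5 c1 (fun h => c5 h.symm) he1.2.1 (fun h => c7 h.symm)
        (fun h => c3 h.symm) (fun h => c2 h.symm) (fun h => c4 h.symm)
        c6 he2.2.1 (fun h => c8 h.symm)
    · exact hv2.2
    · exact he1.2.2
    · exact he2.2.2
    · exact Nat.lt_one_iff.mp c9
    · exact Nat.lt_one_iff.mp c10
    · exact Nat.lt_one_iff.mp c11
  have h1 : ((L ×ˢ (S ×ˢ S)).filter (fun x => x.2.1.1 = x.1)).card
      ≤ L.card * (Δ * S.card) := by
    apply aux_prodA
    intro v2 _
    apply aux_prodB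
    intro e2 _
    exact (hSfst v2).trans (hdΔ v2)
  have h2 : ((L ×ˢ (S ×ˢ S)).filter (fun x => x.2.1.2 = x.1)).card
      ≤ L.card * (Δ * S.card) := by
    apply aux_prodA
    intro v2 _
    apply aux_prodB
    intro e2 _
    exact (hSsnd v2).trans (hdΔ v2)
  have h3 : ((L ×ˢ (S ×ˢ S)).filter (fun x => x.2.2.1 = x.1)).card
      ≤ L.card * (S.card * Δ) := by
    apply aux_prodA
    intro v2 _
    apply aux_prodA
    intro e1 _
    exact (hSfst v2).trans (hdΔ v2)
  have h4 : ((L ×ˢ (S ×ˢ S)).filter (fun x => x.2.2.2 = x.1)).card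
      ≤ L.card * (S.card * Δ) := by
    apply aux_prodA
    intro v2 _
    apply aux_prodA
    intro e1 _
    exact (hSsnd v2).trans (hdΔ v2)
  have h5 : ((L ×ˢ (S ×ˢ S)).filter (fun x => x.2.2.1 = x.2.1.1)).card
      ≤ L.card * (S.card * Δ) := by
    apply aux_prodA
    intro v2 _
    apply aux_prodA
    intro e1 _
    exact (hSfst e1.1).trans (hdΔ e1.1)
  have h6 : ((L ×ˢ (S ×ˢ S)).filter (fun x => x.2.2.1 = x.2.1.2)).card
      ≤ L.card * (S.card * Δ) := by
    apply aux_prodA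
    intro v2 _
    apply aux_prodA
    intro e1 _
    exact (hSfst e1.2).trans (hdΔ e1.2)
  have h7 : ((L ×ˢ (S ×ˢ S)).filter (fun x => x.2.2.2 = x.2.1.1)).card
      ≤ L.card * (S.card * Δ) := by
    apply aux_prodA
    intro v2 _
    apply aux_prodA
    intro e1 _
    exact (hSsnd e1.1).trans (hdΔ e1.1)
  have h8 : ((L ×ˢ (S ×ˢ S)).filter (fun x => x.2.2.2 = x.2.1.2)).card
      ≤ L.card * (S.card * Δ) := by
    apply aux_prodA
    intro v2 _
    apply aux_prodA
    intro e1 _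
    exact (hSsnd e1.2).trans (hdΔ e1.2)
  have h9 : ((L ×ˢ (S ×ˢ S)).filter (fun x => 1 ≤ mG x.2.1.1 x.1)).card
      ≤ L.card * (Δ * Δ * S.card) := by
    apply aux_prodA
    intro v2 _
    apply aux_prodB
    intro e2 _
    exact bA v2
  have h10 : ((L ×ˢ (S ×ˢ S)).filter (fun x => 1 ≤ mG x.1 x.2.2.1)).card
      ≤ L.card * (S.card * (Δ * Δ)) := by
    apply aux_prodA
    intro v2 _
    apply aux_prodA
    intro e1 _
    exact bB v2
  have h11 : ((L ×ˢ (S ×ˢ S)).filter (fun x => 1 ≤ mG x.2.1.2 x.2.2.2)).card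
      ≤ L.card * (S.card * (Δ * Δ)) := by
    apply aux_prodA
    intro v2 _
    apply aux_prodA
    intro e1 _
    exact bC e1.2
  have hbad2 : ((L ×ˢ (S ×ˢ S)).filter
      (fun x => ¬ (![x.2.1.1, x.1, x.2.2.1, x.2.1.2, x.2.2.2] ∈ T))).card
      ≤ L.card * (S.card * (8 * Δ + 3 * (Δ * Δ))) := by
    refine ((Finset.card_le_card hbadsub).trans
      ((aux_or_card _ _ _).trans (add_le_add h1 ((aux_or_card _ _ _).trans (add_le_add h2 ((aux_or_card _ _ _).trans (add_le_add h3 ((aux_or_card _ _ _).trans (add_le_add h4 ((aux_or_card _ _ _).trans (add_le_add h5 ((aux_or_card _ _ _).trans (add_le_add h6 ((aux_or_card _ _ _).trans (add_le_add h7 ((aux_or_card _ _ _).trans (add_le_add h8 ((aux_or_card _ _ _).trans (add_le_add h9 ((aux_or_card _ _ _).trans (add_le_add h10 h11))))))))))))))))))))).trans (le_of_eq ?_)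
    ring
  obtain ⟨bN, hbN⟩ : ∃ bN, ((L ×ˢ (S ×ˢ S)).filter
      (fun x => ¬ (![x.2.1.1, x.1, x.2.2.1, x.2.1.2, x.2.2.2] ∈ T))).card = bN := ⟨_, rfl⟩
  rw [hbN] at hpart hbad2
  -- a loop vertex gives Δ ≥ 2 and M ≥ 2
  obtain ⟨v0, hv0⟩ : ∃ v, 1 ≤ mG v v := by
    by_contra h
    push_neg at h
    have : m1 = 0 := by
      rw [hm1]; exact Finset.sum_eq_zero fun v _ => by have := h v; omega
    omega
  have hd0 : 2 ≤ d v0 := by have := hdeg' v0; omega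
  have hΔ2 : 2 ≤ Δ := le_trans hd0 (hdΔ v0)
  have hM2' : 2 ≤ M := le_trans hd0 (by
    rw [hM]; exact Finset.single_le_sum (fun i _ => Nat.zero_le _) (mem_univ v0))
  have hM2Δ : M2 ≤ (Δ - 1) * M := by
    rw [hM2, hM, Finset.mul_sum]
    refine Finset.sum_le_sum fun i _ => ?_
    calc d i * (d i - 1) = (d i - 1) * d i := by ring
      _ ≤ (Δ - 1) * d i := Nat.mul_le_mul (Nat.sub_le_sub_right (hdΔ i) 1) le_rfl
  -- real-number versions
  have hMpos : (0:ℝ) < (M:ℝ) := by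
    have : (2:ℝ) ≤ (M:ℝ) := by exact_mod_cast hM2'
    linarith
  have hΔR : (2:ℝ) ≤ (Δ:ℝ) := by exact_mod_cast hΔ2
  have hm1M : (m1:ℝ) * M ≤ M2 := (le_div_iff₀ hMpos).mp hm1le
  have hm2M : (m2:ℝ) * (M:ℝ)^2 ≤ (M2:ℝ)^2 := (le_div_iff₀ (by positivity)).mp hm2le
  have hM2R : (M2:ℝ) ≤ ((Δ:ℝ) - 1) * M := by
    calc (M2:ℝ) ≤ ((Δ - 1 : ℕ) : ℝ) * M := by exact_mod_cast hM2Δ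
      _ = ((Δ:ℝ) - 1) * M := by
          rw [Nat.cast_sub (by omega : 1 ≤ Δ)]; norm_num
  have hm1Δ : (m1:ℝ) ≤ (Δ:ℝ) - 1 :=
    le_of_mul_le_mul_right (by linarith [hm1M.trans hM2R]) hMpos
  have hm2Δ : (m2:ℝ) ≤ ((Δ:ℝ) - 1)^2 := by
    have h' : (M2:ℝ)^2 ≤ (((Δ:ℝ) - 1) * M)^2 :=
      pow_le_pow_left₀ (Nat.cast_nonneg M2) hM2R 2
    have h'' : (m2:ℝ) * (M:ℝ)^2 ≤ ((Δ:ℝ) - 1)^2 * (M:ℝ)^2 := by nlinarith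
    exact le_of_mul_le_mul_right h'' (by positivity)
  -- cast the counting facts
  have e0 : fl + bN = m1 * (S.card * S.card) := by
    rw [hflT, ← hgood, hm1L]; exact hpart
  have e1 : (fl:ℝ) + (bN:ℝ) = (m1:ℝ) * ((S.card:ℝ) * (S.card:ℝ)) := by exact_mod_cast e0
  have e2N : bN ≤ m1 * (S.card * (8 * Δ + 3 * (Δ * Δ))) := by rw [hm1L]; exact hbad2
  have e2 : (bN:ℝ) ≤ (m1:ℝ) * ((S.card:ℝ) * (8 * (Δ:ℝ) + 3 * ((Δ:ℝ) * (Δ:ℝ)))) := by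
    exact_mod_cast e2N
  have e3N : S.card + 4 * m2 + 2 * m1 = M := by omega
  have e3 : ((S.card:ℝ)) + 4 * (m2:ℝ) + 2 * (m1:ℝ) = (M:ℝ) := by exact_mod_cast e3N
  -- final arithmetic
  have hm1nn : (0:ℝ) ≤ (m1:ℝ) := Nat.cast_nonneg m1
  have hm2nn : (0:ℝ) ≤ (m2:ℝ) := Nat.cast_nonneg m2
  have hsEq : (S.card:ℝ) = (M:ℝ) - (2 * (m1:ℝ) + 4 * (m2:ℝ)) := by linarith
  have hsle : (S.card:ℝ) ≤ (M:ℝ) := by linarith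
  have step2 : (m1:ℝ) * ((S.card:ℝ) * (8 * (Δ:ℝ) + 3 * ((Δ:ℝ) * (Δ:ℝ))))
      ≤ (m1:ℝ) * ((M:ℝ) * (8 * (Δ:ℝ) + 3 * ((Δ:ℝ) * (Δ:ℝ)))) := by
    have hc : (0:ℝ) ≤ 8 * (Δ:ℝ) + 3 * ((Δ:ℝ) * (Δ:ℝ)) := by positivity
    exact mul_le_mul_of_nonneg_left (mul_le_mul_of_nonneg_right hsle hc) hm1nn
  have step3 : (m1:ℝ) * ((M:ℝ) * (M:ℝ))
      - 2 * ((m1:ℝ) * (M:ℝ)) * (2 * (m1:ℝ) + 4 * (m2:ℝ))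
      ≤ (m1:ℝ) * ((S.card:ℝ) * (S.card:ℝ)) := by
    have h0 : (0:ℝ) ≤ (m1:ℝ) * ((2 * (m1:ℝ) + 4 * (m2:ℝ)) * (2 * (m1:ℝ) + 4 * (m2:ℝ))) := by
      positivity
    calc (m1:ℝ) * ((M:ℝ) * (M:ℝ)) - 2 * ((m1:ℝ) * (M:ℝ)) * (2 * (m1:ℝ) + 4 * (m2:ℝ))
        ≤ (m1:ℝ) * ((M:ℝ) * (M:ℝ)) - 2 * ((m1:ℝ) * (M:ℝ)) * (2 * (m1:ℝ) + 4 * (m2:ℝ))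
          + (m1:ℝ) * ((2 * (m1:ℝ) + 4 * (m2:ℝ)) * (2 * (m1:ℝ) + 4 * (m2:ℝ))) := by linarith
      _ = (m1:ℝ) * (((M:ℝ) - (2 * (m1:ℝ) + 4 * (m2:ℝ)))
          * ((M:ℝ) - (2 * (m1:ℝ) + 4 * (m2:ℝ)))) := by ring
      _ = (m1:ℝ) * ((S.card:ℝ) * (S.card:ℝ)) := by rw [← hsEq]
  have step4 : 2 * ((m1:ℝ) * (M:ℝ)) * (2 * (m1:ℝ) + 4 * (m2:ℝ))
      ≤ (m1:ℝ) * (M:ℝ) * (2 * (2 * ((Δ:ℝ) - 1) + 4 * ((Δ:ℝ) - 1)^2)) := by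
    have hb : (2 * (m1:ℝ) + 4 * (m2:ℝ)) ≤ 2 * ((Δ:ℝ) - 1) + 4 * ((Δ:ℝ) - 1)^2 := by
      nlinarith
    calc 2 * ((m1:ℝ) * (M:ℝ)) * (2 * (m1:ℝ) + 4 * (m2:ℝ))
        ≤ 2 * ((m1:ℝ) * (M:ℝ)) * (2 * ((Δ:ℝ) - 1) + 4 * ((Δ:ℝ) - 1)^2) := by
          apply mul_le_mul_of_nonneg_left hb (by positivity)
      _ = (m1:ℝ) * (M:ℝ) * (2 * (2 * ((Δ:ℝ) - 1) + 4 * ((Δ:ℝ) - 1)^2)) := by ring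
  have ringeq : (m1:ℝ) * (M:ℝ) * (2 * (2 * ((Δ:ℝ) - 1) + 4 * ((Δ:ℝ) - 1)^2))
      + (m1:ℝ) * ((M:ℝ) * (8 * (Δ:ℝ) + 3 * ((Δ:ℝ) * (Δ:ℝ))))
      = (m1:ℝ) * (M:ℝ) * (11 * (Δ:ℝ)^2 - 4 * (Δ:ℝ) + 4) := by ring
  have key : (m1:ℝ) * (M:ℝ)^2 - (m1:ℝ) * (M:ℝ) * (11 * (Δ:ℝ)^2 - 4 * (Δ:ℝ) + 4)
      ≤ (fl:ℝ) := by nlinarith [e1, e2, step2, step3, step4, ringeq]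
  refine ⟨?_, hupper⟩
  have hM0 : (M:ℝ) ≠ 0 := ne_of_gt hMpos
  calc (m1:ℝ) * (M:ℝ)^2 * (1 - (11 * (Δ:ℝ)^2 - 4 * (Δ:ℝ) + 4) / (M:ℝ))
      = (m1:ℝ) * (M:ℝ)^2 - (m1:ℝ) * (M:ℝ) * (11 * (Δ:ℝ)^2 - 4 * (Δ:ℝ) + 4) := by
        field_simp
    _ ≤ (fl:ℝ) := key
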